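/- Let A, B : Fin n → ℝ and let F ⊆ Fin n × Fin n be a set of positions with |F| = f. The number of distinct permutations of F that can arise as the sorting order of the values ((i,j) ↦ A(i) + B(j)) restricted to F, taken over all choices of (A, B) ∈ ℝ^{2n} with all these values distinct, is at most the number of sign vectors realized by the (f choose 2) hyperplanes x_i + y_j − x_k − y_l = 0 in ℝ^{2n}, which is O((f choose 2)^{2n}). -/
import Mathlib

private lemma sign_eq_neg_one_iff' {x : ℝ} : Real.sign x = -1 ↔ x < 0 := by
  constructor
  · intro h
    rcases lt_trichotomy x 0 with h' | h' | h'
    · exact h'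
    · simp [h', Real.sign_zero] at h
    · rw [Real.sign_of_pos h'] at h; norm_num at h
  · exact Real.sign_of_neg

/-- The number of realizable sorting orders of `(A+B)|_F` is at most the number of
sign vectors realized, over all inputs `(A,B) ∈ ℝ^{2n}`, by the `C(|F|,2)` hyperplanes
`x_i + y_j - x_k - y_l = 0` (one for each pair of positions of `F`). -/
theorem realizable_orders_le_sign_vectors (n f : ℕ)
    (F : Finset (Fin n × Fin n)) (hF : F.card = f) :
    Set.ncard {e : Fin f → Fin n × Fin n |
        Function.Injective e ∧ (∀ t, e t ∈ F) ∧
        ∃ A B : Fin n → ℝ,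
          (Set.InjOn (fun p : Fin n × Fin n => A p.1 + B p.2) ↑F) ∧
          StrictMono (fun t => A (e t).1 + B (e t).2)} ≤
      Set.ncard {σ : {p // p ∈ F} × {p // p ∈ F} → ℝ |
        ∃ A B : Fin n → ℝ, ∀ pq : {p // p ∈ F} × {p // p ∈ F},
          σ pq = Real.sign
            (A (pq.1 : Fin n × Fin n).1 + B (pq.1 : Fin n × Fin n).2
              - A (pq.2 : Fin n × Fin n).1 - B (pq.2 : Fin n × Fin n).2)} := by
  classical
  set T : Set ({p // p ∈ F} × {p // p ∈ F} → ℝ) :=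
    {σ | ∃ A B : Fin n → ℝ, ∀ pq : {p // p ∈ F} × {p // p ∈ F},
          σ pq = Real.sign
            (A (pq.1 : Fin n × Fin n).1 + B (pq.1 : Fin n × Fin n).2
              - A (pq.2 : Fin n × Fin n).1 - B (pq.2 : Fin n × Fin n).2)} with hT
  -- T is finite: it consists of functions valued in {-1,0,1}.
  have hTfin : T.Finite := by
    have hsub : T ⊆ Set.pi Set.univ
        (fun _ : {p // p ∈ F} × {p // p ∈ F} => ({-1, 0, 1} : Set ℝ)) := by
      rintro σ ⟨A, B, hσ⟩ pq _
      rw [hσ pq]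
      rcases Real.sign_apply_eq
        (A (pq.1 : Fin n × Fin n).1 + B (pq.1 : Fin n × Fin n).2
          - A (pq.2 : Fin n × Fin n).1 - B (pq.2 : Fin n × Fin n).2) with h | h | h <;>
        simp [h]
    exact Set.Finite.subset
      (Set.Finite.pi (fun _ => (by simp : ({-1, 0, 1} : Set ℝ).Finite))) hsub
  -- predicate for a witness pair
  set Q : (Fin f → Fin n × Fin n) → ((Fin n → ℝ) × (Fin n → ℝ)) → Prop :=
    fun e AB => (Set.InjOn (fun p : Fin n × Fin n => AB.1 p.1 + AB.2 p.2) ↑F) ∧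
      StrictMono (fun t => AB.1 (e t).1 + AB.2 (e t).2) with hQ
  set Φ : (Fin f → Fin n × Fin n) → ({p // p ∈ F} × {p // p ∈ F} → ℝ) :=
    fun e => if h : ∃ AB, Q e AB then
      (fun pq => Real.sign
        (h.choose.1 (pq.1 : Fin n × Fin n).1 + h.choose.2 (pq.1 : Fin n × Fin n).2
          - h.choose.1 (pq.2 : Fin n × Fin n).1 - h.choose.2 (pq.2 : Fin n × Fin n).2))
      else 0 with hΦ
  apply Set.ncard_le_ncard_of_injOn Φ _ _ hTfin
  · rintro e ⟨-, -, A, B, h1, h2⟩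
    have hex : ∃ AB, Q e AB := ⟨(A, B), h1, h2⟩
    refine ⟨hex.choose.1, hex.choose.2, fun pq => ?_⟩
    simp only [hΦ, dif_pos hex]
  · rintro e1 ⟨he1inj, he1mem, hw1⟩ e2 ⟨he2inj, he2mem, hw2⟩ heq
    have hex1 : ∃ AB, Q e1 AB := by obtain ⟨A, B, h1, h2⟩ := hw1; exact ⟨(A, B), h1, h2⟩
    have hex2 : ∃ AB, Q e2 AB := by obtain ⟨A, B, h1, h2⟩ := hw2; exact ⟨(A, B), h1, h2⟩
    obtain ⟨hinj1, hmono1⟩ := hex1.choose_spec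
    obtain ⟨hinj2, hmono2⟩ := hex2.choose_spec
    set v1 : Fin n × Fin n → ℝ := fun p => hex1.choose.1 p.1 + hex1.choose.2 p.2 with hv1
    set v2 : Fin n × Fin n → ℝ := fun p => hex2.choose.1 p.1 + hex2.choose.2 p.2 with hv2
    -- the sign vectors agree
    have hsigns : ∀ p q : Fin n × Fin n, p ∈ F → q ∈ F →
        Real.sign (v1 p - v1 q) = Real.sign (v2 p - v2 q) := by
      intro p q hp hq
      have := congrFun heq (⟨p, hp⟩, ⟨q, hq⟩)
      simpa only [hΦ, dif_pos hex1, dif_pos hex2, hv1, hv2, sub_sub] using this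
    have hlt : ∀ p q : Fin n × Fin n, p ∈ F → q ∈ F → (v1 p < v1 q ↔ v2 p < v2 q) := by
      intro p q hp hq
      rw [← sub_neg, ← sub_neg (a := v2 p), ← sign_eq_neg_one_iff',
        ← sign_eq_neg_one_iff', hsigns p q hp hq]
    -- both e1 and e2 are surjective onto F
    have hrange : ∀ (e : Fin f → Fin n × Fin n), Function.Injective e →
        (∀ t, e t ∈ F) → Set.range e = ↑F := by
      intro e heinj hemem
      have himg : Finset.image e Finset.univ = F := by
        apply Finset.eq_of_subset_of_card_le
        · intro p hp
          obtain ⟨t, -, rfl⟩ := Finset.mem_image.1 hp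
          exact hemem t
        · rw [Finset.card_image_of_injective _ heinj, Finset.card_univ, Fintype.card_fin, hF]
      rw [← himg]
      ext p
      simp
    -- compare the two enumerations via v1
    have hg1 : StrictMono (fun t => v1 (e1 t)) := hmono1
    have hg2 : StrictMono (fun t => v1 (e2 t)) := by
      intro s t hst
      exact (hlt _ _ (he2mem s) (he2mem t)).2 (hmono2 hst)
    have hranges : Set.range (fun t => v1 (e1 t)) = Set.range (fun t => v1 (e2 t)) := by
      have h1 : Set.range (fun t => v1 (e1 t)) = v1 '' (Set.range e1) := by
        rw [← Set.range_comp]; rfl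
      have h2 : Set.range (fun t => v1 (e2 t)) = v1 '' (Set.range e2) := by
        rw [← Set.range_comp]; rfl
      rw [h1, h2, hrange e1 he1inj he1mem, hrange e2 he2inj he2mem]
    haveI : WellFoundedLT (Fin f) := inferInstance
    have hfun : (fun t => v1 (e1 t)) = (fun t => v1 (e2 t)) :=
      (hg1.range_inj hg2).1 hranges
    funext t
    exact hinj1 (he1mem t) (he2mem t) (congrFun hfun t)
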